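/- Let V and W be k-dimensional affine subspaces of ℝ^n, and define d(V,W) as the Hausdorff distance between Ṽ ∩ B_1 and W̃ ∩ B_1, where Ṽ, W̃ are the linear subspaces parallel to V, W. Then for every x ∈ ℝ^n, ‖π_V(x) − π_W(x)‖ ≤ 2 d(V,W) ‖x‖, where π_V, π_W denote the orthogonal projections onto Ṽ and W̃. -/

import Mathlib

open Metric

/-- Key lemma: if `v ∈ A`, then the distance from `v` to its projection on `B` is
at most `d(A,B) * ‖v‖`, where `d` is the Hausdorff distance of unit-ball slices. -/
lemma key_proj_est {n : ℕ} (A B : Submodule ℝ (EuclideanSpace ℝ (Fin n)))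
    {v : EuclideanSpace ℝ (Fin n)} (hv : v ∈ A) :
    ‖v - (Submodule.orthogonalProjection B v : EuclideanSpace ℝ (Fin n))‖ ≤
      hausdorffDist ((A : Set (EuclideanSpace ℝ (Fin n))) ∩ closedBall 0 1)
        ((B : Set (EuclideanSpace ℝ (Fin n))) ∩ closedBall 0 1) * ‖v‖ := by
  set d := hausdorffDist ((A : Set (EuclideanSpace ℝ (Fin n))) ∩ closedBall 0 1) ((B : Set (EuclideanSpace ℝ (Fin n))) ∩ closedBall 0 1) with hd
  rcases eq_or_ne v 0 with rfl | hv0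
  · simp
  have hvn : (0 : ℝ) < ‖v‖ := norm_pos_iff.2 hv0
  set u : EuclideanSpace ℝ (Fin n) := ‖v‖⁻¹ • v with hu
  have hu1 : ‖u‖ = 1 := by
    rw [hu, norm_smul, norm_inv, norm_norm, inv_mul_cancel₀ hvn.ne']
  have hAne : ((A : Set (EuclideanSpace ℝ (Fin n))) ∩ closedBall 0 1).Nonempty :=
    ⟨0, A.zero_mem, mem_closedBall_self zero_le_one⟩
  have hBne : ((B : Set (EuclideanSpace ℝ (Fin n))) ∩ closedBall 0 1).Nonempty :=
    ⟨0, B.zero_mem, mem_closedBall_self zero_le_one⟩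
  have hne : EMetric.hausdorffEdist ((A : Set (EuclideanSpace ℝ (Fin n))) ∩ closedBall 0 1)
      ((B : Set (EuclideanSpace ℝ (Fin n))) ∩ closedBall 0 1) ≠ ⊤ :=
    hausdorffEdist_ne_top_of_nonempty_of_bounded hAne hBne
      ((isBounded_closedBall).subset Set.inter_subset_right)
      ((isBounded_closedBall).subset Set.inter_subset_right)
  have huA : u ∈ (A : Set (EuclideanSpace ℝ (Fin n))) ∩ closedBall 0 1 := by
    refine ⟨A.smul_mem _ hv, ?_⟩
    rw [mem_closedBall, dist_zero_right, hu1]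
  have h1 : infDist u ((B : Set (EuclideanSpace ℝ (Fin n))) ∩ closedBall 0 1) ≤ d :=
    infDist_le_hausdorffDist_of_mem huA hne
  have hmin : ∀ w ∈ (B : Set (EuclideanSpace ℝ (Fin n))) ∩ closedBall 0 1,
      ‖u - (Submodule.orthogonalProjection B u : (EuclideanSpace ℝ (Fin n)))‖ ≤ dist u w := by
    intro w hw
    rw [dist_eq_norm, ← Submodule.starProjection_apply, Submodule.starProjection_minimal]
    exact ciInf_le ⟨0, fun r ⟨y, hy⟩ => hy ▸ norm_nonneg _⟩ (⟨w, hw.1⟩ : B)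
  have h2 : ‖u - (Submodule.orthogonalProjection B u : (EuclideanSpace ℝ (Fin n)))‖ ≤ d := by
    by_contra h
    push_neg at h
    obtain ⟨w, hw, hlt⟩ := (infDist_lt_iff hBne).1 (lt_of_le_of_lt h1 h)
    exact absurd hlt (not_lt.2 (hmin w hw))
  have hscale : v - (Submodule.orthogonalProjection B v : (EuclideanSpace ℝ (Fin n)))
      = ‖v‖ • (u - (Submodule.orthogonalProjection B u : (EuclideanSpace ℝ (Fin n)))) := by
    rw [hu, map_smul, smul_sub, Submodule.coe_smul, smul_smul, smul_smul,
      mul_inv_cancel₀ hvn.ne', one_smul, one_smul]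
  calc ‖v - (Submodule.orthogonalProjection B v : (EuclideanSpace ℝ (Fin n)))‖
      = ‖v‖ * ‖u - (Submodule.orthogonalProjection B u : (EuclideanSpace ℝ (Fin n)))‖ := by
        rw [hscale, norm_smul, norm_norm]
    _ ≤ ‖v‖ * d := by
        exact mul_le_mul_of_nonneg_left h2 hvn.le
    _ = d * ‖v‖ := mul_comm _ _

/-- If `V, W` are `k`-dimensional subspaces of `ℝⁿ` and `d(V,W)` is the Hausdorff
distance between their unit-ball slices, then the orthogonal projections satisfy
`‖π_V(x) − π_W(x)‖ ≤ 2 d(V,W) ‖x‖`. -/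
theorem stmt11 {n k : ℕ} (V W : Submodule ℝ (EuclideanSpace ℝ (Fin n)))
    (hV : Module.finrank ℝ V = k) (hW : Module.finrank ℝ W = k)
    (x : EuclideanSpace ℝ (Fin n)) :
    ‖(Submodule.orthogonalProjection V x : EuclideanSpace ℝ (Fin n)) -
        (Submodule.orthogonalProjection W x : EuclideanSpace ℝ (Fin n))‖ ≤
      2 * hausdorffDist ((V : Set (EuclideanSpace ℝ (Fin n))) ∩ closedBall 0 1)
          ((W : Set (EuclideanSpace ℝ (Fin n))) ∩ closedBall 0 1) * ‖x‖ := by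
  set d := hausdorffDist ((V : Set (EuclideanSpace ℝ (Fin n))) ∩ closedBall 0 1) ((W : Set (EuclideanSpace ℝ (Fin n))) ∩ closedBall 0 1) with hd
  have hd0 : 0 ≤ d := hausdorffDist_nonneg
  set a : EuclideanSpace ℝ (Fin n) := (Submodule.orthogonalProjection V x : (EuclideanSpace ℝ (Fin n))) with ha
  set b : EuclideanSpace ℝ (Fin n) := (Submodule.orthogonalProjection W x : (EuclideanSpace ℝ (Fin n))) with hb
  have hax : ‖a‖ ≤ ‖x‖ := by
    calc ‖a‖ = ‖Submodule.orthogonalProjection V x‖ := rfl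
      _ ≤ ‖Submodule.orthogonalProjection V‖ * ‖x‖ := (Submodule.orthogonalProjection V).le_opNorm x
      _ ≤ 1 * ‖x‖ := mul_le_mul_of_nonneg_right (Submodule.orthogonalProjectionOnto_norm_le V) (norm_nonneg x)
      _ = ‖x‖ := one_mul _
  -- Term 1
  have h1 : ‖a - (Submodule.orthogonalProjection W a : (EuclideanSpace ℝ (Fin n)))‖ ≤ d * ‖x‖ := by
    calc ‖a - (Submodule.orthogonalProjection W a : (EuclideanSpace ℝ (Fin n)))‖ ≤ d * ‖a‖ :=
          key_proj_est V W (Submodule.orthogonalProjection V x).2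
      _ ≤ d * ‖x‖ := mul_le_mul_of_nonneg_left hax hd0
  -- Term 2
  set z : EuclideanSpace ℝ (Fin n) := (Submodule.orthogonalProjection W (x - a) : (EuclideanSpace ℝ (Fin n))) with hz
  have hzW : z ∈ W := (Submodule.orthogonalProjection W (x - a)).2
  have hxa : x - a ∈ Vᗮ := Submodule.sub_starProjection_mem_orthogonal x
  have hzperp : z - (Submodule.orthogonalProjection V z : (EuclideanSpace ℝ (Fin n))) ∈ Vᗮ :=
    Submodule.sub_starProjection_mem_orthogonal z
  have hsq : ‖z‖ ^ 2 = @inner ℝ (EuclideanSpace ℝ (Fin n)) _ (z - (Submodule.orthogonalProjection V z : (EuclideanSpace ℝ (Fin n)))) x := by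
    have e1 : ‖z‖ ^ 2 = @inner ℝ (EuclideanSpace ℝ (Fin n)) _ z (x - a) := by
      have horth : (x - a) - z ∈ Wᗮ := Submodule.sub_starProjection_mem_orthogonal (x - a)
      have : @inner ℝ (EuclideanSpace ℝ (Fin n)) _ z ((x - a) - z) = 0 := by
        rw [real_inner_comm]
        exact (Submodule.mem_orthogonal Wᗮ z).1
          (Submodule.le_orthogonal_orthogonal W hzW) _ horth
      have e := real_inner_self_eq_norm_sq z
      calc ‖z‖ ^ 2 = @inner ℝ (EuclideanSpace ℝ (Fin n)) _ z z := (real_inner_self_eq_norm_sq z).symm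
        _ = @inner ℝ (EuclideanSpace ℝ (Fin n)) _ z z + @inner ℝ (EuclideanSpace ℝ (Fin n)) _ z ((x - a) - z) := by rw [this, add_zero]
        _ = @inner ℝ (EuclideanSpace ℝ (Fin n)) _ z (z + ((x - a) - z)) := (inner_add_right _ _ _).symm
        _ = @inner ℝ (EuclideanSpace ℝ (Fin n)) _ z (x - a) := by rw [show z + (x - a - z) = x - a by abel]
    have e2 : @inner ℝ (EuclideanSpace ℝ (Fin n)) _ z (x - a)
        = @inner ℝ (EuclideanSpace ℝ (Fin n)) _ (z - (Submodule.orthogonalProjection V z : (EuclideanSpace ℝ (Fin n)))) (x - a) := by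
      have hpz : @inner ℝ (EuclideanSpace ℝ (Fin n)) _ ((Submodule.orthogonalProjection V z : (EuclideanSpace ℝ (Fin n)))) (x - a) = 0 :=
        (Submodule.mem_orthogonal V (x - a)).1 hxa _ (Submodule.orthogonalProjection V z).2
      rw [inner_sub_left, hpz, sub_zero]
    have e3 : @inner ℝ (EuclideanSpace ℝ (Fin n)) _ (z - (Submodule.orthogonalProjection V z : (EuclideanSpace ℝ (Fin n)))) (x - a)
        = @inner ℝ (EuclideanSpace ℝ (Fin n)) _ (z - (Submodule.orthogonalProjection V z : (EuclideanSpace ℝ (Fin n)))) x := by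
      rw [inner_sub_right]
      have : @inner ℝ (EuclideanSpace ℝ (Fin n)) _ (z - (Submodule.orthogonalProjection V z : (EuclideanSpace ℝ (Fin n)))) a = 0 :=
        (Submodule.mem_orthogonal' V _).1 hzperp a (Submodule.orthogonalProjection V x).2
      rw [this, sub_zero]
    rw [e1, e2, e3]
  have hzd : ‖z‖ ≤ d * ‖x‖ := by
    have hk : ‖z - (Submodule.orthogonalProjection V z : (EuclideanSpace ℝ (Fin n)))‖ ≤ d * ‖z‖ := by
      have := key_proj_est W V hzW
      rwa [hausdorffDist_comm, ← hd] at this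
    have hcs : ‖z‖ ^ 2 ≤ d * ‖z‖ * ‖x‖ := by
      calc ‖z‖ ^ 2 = @inner ℝ (EuclideanSpace ℝ (Fin n)) _ (z - (Submodule.orthogonalProjection V z : (EuclideanSpace ℝ (Fin n)))) x := hsq
        _ ≤ ‖z - (Submodule.orthogonalProjection V z : (EuclideanSpace ℝ (Fin n)))‖ * ‖x‖ := real_inner_le_norm _ _
        _ ≤ d * ‖z‖ * ‖x‖ := mul_le_mul_of_nonneg_right hk (norm_nonneg x)
    rcases eq_or_lt_of_le (norm_nonneg z) with h0 | h0
    · rw [← h0]; positivity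
    · nlinarith
  -- combine
  have hsplit : a - b = (a - (Submodule.orthogonalProjection W a : (EuclideanSpace ℝ (Fin n)))) - z := by
    rw [hz, map_sub, Submodule.coe_sub, ← hb]
    abel
  calc ‖a - b‖ = ‖(a - (Submodule.orthogonalProjection W a : (EuclideanSpace ℝ (Fin n)))) - z‖ := by rw [hsplit]
    _ ≤ ‖a - (Submodule.orthogonalProjection W a : (EuclideanSpace ℝ (Fin n)))‖ + ‖z‖ := norm_sub_le _ _
    _ ≤ d * ‖x‖ + d * ‖x‖ := add_le_add h1 hzd
    _ = 2 * d * ‖x‖ := by ring
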